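/- arXiv:1807.05426 — 3 statements merged into one kernel-verified Lean document; each statement's English description precedes it below -/
import Mathlib

section
/- Let T* > 0, a ≠ 0, k ∈ ℝ, and define v as in the explicit axisymmetric solution: v₁ = a x₁/(T*-t) + k x₂ r^{-(2+1/a)}/(T*-t), v₂ = a x₂/(T*-t) - k x₁ r^{-(2+1/a)}/(T*-t), v₃ = -2a x₃/(T*-t), with r = √(x₁²+x₂²). Then there exists a pressure P(t,x) (e.g. an explicit quadratic-plus-radial function) such that ∂ₜv + (v·∇)v = -∇P holds pointwise for r > 0 and 0 ≤ t < T*. -/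
set_option maxHeartbeats 1000000


/-- First Cartesian component of the explicit axisymmetric Euler solution. -/
noncomputable def V1 (T a k t x1 x2 x3 : ℝ) : ℝ :=
  a * x1 / (T - t) + k * x2 / ((Real.sqrt (x1 ^ 2 + x2 ^ 2)) ^ ((2 : ℝ) + 1 / a) * (T - t))

/-- Second Cartesian component of the explicit axisymmetric Euler solution. -/
noncomputable def V2 (T a k t x1 x2 x3 : ℝ) : ℝ :=
  a * x2 / (T - t) - k * x1 / ((Real.sqrt (x1 ^ 2 + x2 ^ 2)) ^ ((2 : ℝ) + 1 / a) * (T - t))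

/-- Third Cartesian component of the explicit axisymmetric Euler solution. -/
noncomputable def V3 (T a k t x1 x2 x3 : ℝ) : ℝ := -2 * a * x3 / (T - t)

/-- Explicit pressure for the axisymmetric Euler solution. -/
noncomputable def Pfun (T a k t y1 y2 y3 : ℝ) : ℝ :=
  (-(a+a^2)*(y1^2+y2^2)/2
   + (if a = -1 then k^2/2 * Real.log (y1^2+y2^2)
      else k^2/(2*(1-(2+1/a))) * (y1^2+y2^2) ^ ((1-(2+1/a)) : ℝ))
   + (a-2*a^2)*y3^2) / (T-t)^2

lemma hda_sq1 (x y m : ℝ) (h : x^2 + y^2 ≠ 0) :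
    HasDerivAt (fun s : ℝ => (s^2 + y^2) ^ m) (2*x*m*(x^2+y^2)^(m-1)) x := by
  have h1 : HasDerivAt (fun s : ℝ => s^2 + y^2) (2*x) x := by
    simpa using (hasDerivAt_pow 2 x).add_const (y^2)
  have := h1.rpow_const (p := m) (Or.inl h)
  simpa [mul_assoc] using this

lemma hda_sq2 (x y m : ℝ) (h : x^2 + y^2 ≠ 0) :
    HasDerivAt (fun s : ℝ => (x^2 + s^2) ^ m) (2*y*m*(x^2+y^2)^(m-1)) y := by
  have h1 : HasDerivAt (fun s : ℝ => x^2 + s^2) (2*y) y := by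
    simpa using (hasDerivAt_pow 2 y).const_add (x^2)
  have := h1.rpow_const (p := m) (Or.inl h)
  simpa [mul_assoc] using this

lemma hda_invsub (T t : ℝ) (h : T - t ≠ 0) :
    HasDerivAt (fun s : ℝ => (T - s)⁻¹) (1/(T-t)^2) t := by
  have := ((hasDerivAt_id t).const_sub T).fun_inv h
  simpa using this

/-- There exists a pressure `P` such that the explicit velocity field satisfies
the Euler momentum equation `∂ₜv + (v·∇)v = -∇P` pointwise for `r > 0`, `0 ≤ t < T*`. -/
theorem stmt1 (T a k : ℝ) (hT : 0 < T) (ha : a ≠ 0) :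
    ∃ P : ℝ → ℝ → ℝ → ℝ → ℝ,
      ∀ t x1 x2 x3 : ℝ, 0 ≤ t → t < T → 0 < Real.sqrt (x1 ^ 2 + x2 ^ 2) →
        (deriv (fun s => V1 T a k s x1 x2 x3) t
          + V1 T a k t x1 x2 x3 * deriv (fun s => V1 T a k t s x2 x3) x1
          + V2 T a k t x1 x2 x3 * deriv (fun s => V1 T a k t x1 s x3) x2
          + V3 T a k t x1 x2 x3 * deriv (fun s => V1 T a k t x1 x2 s) x3
          = - deriv (fun s => P t s x2 x3) x1) ∧
        (deriv (fun s => V2 T a k s x1 x2 x3) t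
          + V1 T a k t x1 x2 x3 * deriv (fun s => V2 T a k t s x2 x3) x1
          + V2 T a k t x1 x2 x3 * deriv (fun s => V2 T a k t x1 s x3) x2
          + V3 T a k t x1 x2 x3 * deriv (fun s => V2 T a k t x1 x2 s) x3
          = - deriv (fun s => P t x1 s x3) x2) ∧
        (deriv (fun s => V3 T a k s x1 x2 x3) t
          + V1 T a k t x1 x2 x3 * deriv (fun s => V3 T a k t s x2 x3) x1
          + V2 T a k t x1 x2 x3 * deriv (fun s => V3 T a k t x1 s x3) x2
          + V3 T a k t x1 x2 x3 * deriv (fun s => V3 T a k t x1 x2 s) x3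
          = - deriv (fun s => P t x1 x2 s) x3) := by
  refine ⟨Pfun T a k, ?_⟩
  intro t x1 x2 x3 ht htT hr
  have hτ : (0:ℝ) < T - t := sub_pos.mpr htT
  have hτ' : T - t ≠ 0 := ne_of_gt hτ
  have hu : (0:ℝ) < x1^2 + x2^2 := Real.sqrt_pos.mp hr
  have hu' : x1^2 + x2^2 ≠ 0 := ne_of_gt hu
  set m : ℝ := -((2+1/a)/2) with hm
  -- rewriting the velocity components with rpow
  have hV1 : ∀ y1 y2 y3 t' : ℝ, V1 T a k t' y1 y2 y3
      = a*y1/(T-t') + k*y2*((y1^2+y2^2) ^ m)/(T-t') := by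
    intro y1 y2 y3 t'
    have h0 : (0:ℝ) ≤ y1^2+y2^2 := by positivity
    have hs : Real.sqrt (y1^2+y2^2) ^ ((2:ℝ)+1/a) = (y1^2+y2^2) ^ (((2+1/a)/2) : ℝ) := by
      rw [Real.sqrt_eq_rpow, ← Real.rpow_mul h0]
      congr 1; ring
    simp only [V1]
    rw [hs, hm, Real.rpow_neg h0, div_mul_eq_div_div, div_eq_mul_inv (k*y2)]
  have hV2 : ∀ y1 y2 y3 t' : ℝ, V2 T a k t' y1 y2 y3
      = a*y2/(T-t') - k*y1*((y1^2+y2^2) ^ m)/(T-t') := by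
    intro y1 y2 y3 t'
    have h0 : (0:ℝ) ≤ y1^2+y2^2 := by positivity
    have hs : Real.sqrt (y1^2+y2^2) ^ ((2:ℝ)+1/a) = (y1^2+y2^2) ^ (((2+1/a)/2) : ℝ) := by
      rw [Real.sqrt_eq_rpow, ← Real.rpow_mul h0]
      congr 1; ring
    simp only [V2]
    rw [hs, hm, Real.rpow_neg h0, div_mul_eq_div_div, div_eq_mul_inv (k*y1)]
  have hq1 : HasDerivAt (fun s : ℝ => s^2 + x2^2) (2*x1) x1 := by
    simpa using (hasDerivAt_pow 2 x1).add_const (x2^2)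
  have hq2 : HasDerivAt (fun s : ℝ => x1^2 + s^2) (2*x2) x2 := by
    simpa using (hasDerivAt_pow 2 x2).const_add (x1^2)
  -- derivatives of V1
  have hdV1t : deriv (fun s => V1 T a k s x1 x2 x3) t
      = (a*x1 + k*x2*((x1^2+x2^2) ^ m)) * (1/(T-t)^2) := by
    have hfe : (fun s => V1 T a k s x1 x2 x3)
        = fun s => (a*x1 + k*x2*((x1^2+x2^2) ^ m)) * (T-s)⁻¹ := by
      funext s; rw [hV1 x1 x2 x3 s]; ring
    rw [hfe]
    exact ((hda_invsub T t hτ').const_mul (a*x1 + k*x2*((x1^2+x2^2) ^ m))).deriv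
  have hdV1x1 : deriv (fun s => V1 T a k t s x2 x3) x1
      = a/(T-t) + k*x2*(2*x1*m*(x1^2+x2^2)^(m-1))/(T-t) := by
    have hfe : (fun s => V1 T a k t s x2 x3)
        = fun s => a*s/(T-t) + k*x2*((s^2+x2^2) ^ m)/(T-t) := by
      funext s; rw [hV1 s x2 x3 t]
    rw [hfe]
    have h1 : HasDerivAt (fun s : ℝ => a*s/(T-t)) (a/(T-t)) x1 := by
      simpa using ((hasDerivAt_id x1).const_mul a).div_const (T-t)
    exact (h1.add (((hda_sq1 x1 x2 m hu').const_mul (k*x2)).div_const (T-t))).deriv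
  have hdV1x2 : deriv (fun s => V1 T a k t x1 s x3) x2
      = k*(1*((x1^2+x2^2) ^ m) + x2*(2*x2*m*(x1^2+x2^2)^(m-1)))/(T-t) := by
    have hfe : (fun s => V1 T a k t x1 s x3)
        = fun s => a*x1/(T-t) + k*(s*((x1^2+s^2) ^ m))/(T-t) := by
      funext s; rw [hV1 x1 s x3 t]; ring
    rw [hfe]
    exact (((((hasDerivAt_id x2).mul (hda_sq2 x1 x2 m hu')).const_mul k).div_const
      (T-t)).const_add (a*x1/(T-t))).deriv
  have hdV1x3 : deriv (fun s => V1 T a k t x1 x2 s) x3 = 0 := by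
    have hfe : (fun s => V1 T a k t x1 x2 s)
        = fun _ => a*x1/(T-t) + k*x2*((x1^2+x2^2) ^ m)/(T-t) := by
      funext s; rw [hV1 x1 x2 s t]
    rw [hfe]; exact deriv_const _ _
  -- derivatives of V2
  have hdV2t : deriv (fun s => V2 T a k s x1 x2 x3) t
      = (a*x2 - k*x1*((x1^2+x2^2) ^ m)) * (1/(T-t)^2) := by
    have hfe : (fun s => V2 T a k s x1 x2 x3)
        = fun s => (a*x2 - k*x1*((x1^2+x2^2) ^ m)) * (T-s)⁻¹ := by
      funext s; rw [hV2 x1 x2 x3 s]; ring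
    rw [hfe]
    exact ((hda_invsub T t hτ').const_mul (a*x2 - k*x1*((x1^2+x2^2) ^ m))).deriv
  have hdV2x1 : deriv (fun s => V2 T a k t s x2 x3) x1
      = -(k*(1*((x1^2+x2^2) ^ m) + x1*(2*x1*m*(x1^2+x2^2)^(m-1)))/(T-t)) := by
    have hfe : (fun s => V2 T a k t s x2 x3)
        = fun s => a*x2/(T-t) - k*(s*((s^2+x2^2) ^ m))/(T-t) := by
      funext s; rw [hV2 s x2 x3 t]; ring
    rw [hfe]
    exact (((((hasDerivAt_id x1).mul (hda_sq1 x1 x2 m hu')).const_mul k).div_const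
      (T-t)).const_sub (a*x2/(T-t))).deriv
  have hdV2x2 : deriv (fun s => V2 T a k t x1 s x3) x2
      = a/(T-t) - k*x1*(2*x2*m*(x1^2+x2^2)^(m-1))/(T-t) := by
    have hfe : (fun s => V2 T a k t x1 s x3)
        = fun s => a*s/(T-t) - k*x1*((x1^2+s^2) ^ m)/(T-t) := by
      funext s; rw [hV2 x1 s x3 t]
    rw [hfe]
    have h1 : HasDerivAt (fun s : ℝ => a*s/(T-t)) (a/(T-t)) x2 := by
      simpa using ((hasDerivAt_id x2).const_mul a).div_const (T-t)
    exact (h1.sub (((hda_sq2 x1 x2 m hu').const_mul (k*x1)).div_const (T-t))).deriv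
  have hdV2x3 : deriv (fun s => V2 T a k t x1 x2 s) x3 = 0 := by
    have hfe : (fun s => V2 T a k t x1 x2 s)
        = fun _ => a*x2/(T-t) - k*x1*((x1^2+x2^2) ^ m)/(T-t) := by
      funext s; rw [hV2 x1 x2 s t]
    rw [hfe]; exact deriv_const _ _
  -- derivatives of V3
  have hV3 : V3 T a k t x1 x2 x3 = -2*a*x3/(T-t) := rfl
  have hdV3t : deriv (fun s => V3 T a k s x1 x2 x3) t = (-2*a*x3) * (1/(T-t)^2) := by
    have hfe : (fun s => V3 T a k s x1 x2 x3) = fun s => (-2*a*x3) * (T-s)⁻¹ := by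
      funext s; simp only [V3]; ring
    rw [hfe]
    exact ((hda_invsub T t hτ').const_mul (-2*a*x3)).deriv
  have hdV3x1 : deriv (fun s => V3 T a k t s x2 x3) x1 = 0 := by
    have hfe : (fun s => V3 T a k t s x2 x3) = fun _ => -2*a*x3/(T-t) := rfl
    rw [hfe]; exact deriv_const _ _
  have hdV3x2 : deriv (fun s => V3 T a k t x1 s x3) x2 = 0 := by
    have hfe : (fun s => V3 T a k t x1 s x3) = fun _ => -2*a*x3/(T-t) := rfl
    rw [hfe]; exact deriv_const _ _
  have hdV3x3 : deriv (fun s => V3 T a k t x1 x2 s) x3 = -2*a/(T-t) := by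
    have hfe : (fun s => V3 T a k t x1 x2 s) = fun s => (-2*a/(T-t)) * s := by
      funext s; simp only [V3]; ring
    rw [hfe]
    simpa using ((hasDerivAt_id x3).const_mul (-2*a/(T-t))).deriv
  -- derivatives of the pressure
  have hdP1 : deriv (fun s => Pfun T a k t s x2 x3) x1
      = (-(a+a^2)*x1 + k^2*x1*((x1^2+x2^2) ^ m)^2) / (T-t)^2 := by
    by_cases ha1 : a = -1
    · have hfe : (fun s => Pfun T a k t s x2 x3)
          = fun s => (-(a+a^2)*(s^2+x2^2)/2 + k^2/2 * Real.log (s^2+x2^2)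
            + (a-2*a^2)*x3^2) / (T-t)^2 := by
        funext s; simp only [Pfun, if_pos ha1]
      rw [hfe]
      have hd := ((((hq1.const_mul (-(a+a^2))).div_const 2).add
        ((hq1.log hu').const_mul (k^2/2))).add_const ((a-2*a^2)*x3^2)).div_const ((T-t)^2)
      simp only [Pi.add_apply] at hd
      rw [hd.deriv]
      have hA2 : ((x1^2+x2^2) ^ m)^2 = (x1^2+x2^2)⁻¹ := by
        rw [← Real.rpow_natCast ((x1^2+x2^2) ^ m) 2, ← Real.rpow_mul hu.le]
        rw [show m * ((2:ℕ):ℝ) = -1 by rw [hm, ha1]; norm_num]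
        exact Real.rpow_neg_one _
      rw [hA2]
      field_simp
    · have hfe : (fun s => Pfun T a k t s x2 x3)
          = fun s => (-(a+a^2)*(s^2+x2^2)/2
            + k^2/(2*(1-(2+1/a))) * (s^2+x2^2) ^ ((1-(2+1/a)) : ℝ)
            + (a-2*a^2)*x3^2) / (T-t)^2 := by
        funext s; simp only [Pfun, if_neg ha1]
      rw [hfe]
      have hc1 : (1-(2+1/a)) ≠ 0 := by
        intro h
        apply ha1
        have h' : 1/a = -1 := by linarith
        field_simp at h'
        linarith
      have hd := ((((hq1.const_mul (-(a+a^2))).div_const 2).add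
        ((hda_sq1 x1 x2 (1-(2+1/a)) hu').const_mul (k^2/(2*(1-(2+1/a)))))).add_const
        ((a-2*a^2)*x3^2)).div_const ((T-t)^2)
      simp only [Pi.add_apply] at hd
      rw [hd.deriv]
      have hA2 : ((x1^2+x2^2) ^ m)^2 = (x1^2+x2^2) ^ ((1-(2+1/a)-1) : ℝ) := by
        rw [← Real.rpow_natCast ((x1^2+x2^2) ^ m) 2, ← Real.rpow_mul hu.le]
        congr 1
        rw [hm]; push_cast; ring
      have hgen : ∀ c x X : ℝ, c ≠ 0 → k^2/(2*c) * (2*x*c*X) = k^2*x*X := by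
        intro c x X hcne
        field_simp
      have hsimp : ∀ x X : ℝ, k^2/(2*(1-(2+1/a))) * (2*x*(1-(2+1/a))*X) = k^2*x*X :=
        fun x X => hgen (1-(2+1/a)) x X hc1
      rw [hA2, hsimp]
      ring
  have hdP2 : deriv (fun s => Pfun T a k t x1 s x3) x2
      = (-(a+a^2)*x2 + k^2*x2*((x1^2+x2^2) ^ m)^2) / (T-t)^2 := by
    by_cases ha1 : a = -1
    · have hfe : (fun s => Pfun T a k t x1 s x3)
          = fun s => (-(a+a^2)*(x1^2+s^2)/2 + k^2/2 * Real.log (x1^2+s^2)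
            + (a-2*a^2)*x3^2) / (T-t)^2 := by
        funext s; simp only [Pfun, if_pos ha1]
      rw [hfe]
      have hd := ((((hq2.const_mul (-(a+a^2))).div_const 2).add
        ((hq2.log hu').const_mul (k^2/2))).add_const ((a-2*a^2)*x3^2)).div_const ((T-t)^2)
      simp only [Pi.add_apply] at hd
      rw [hd.deriv]
      have hA2 : ((x1^2+x2^2) ^ m)^2 = (x1^2+x2^2)⁻¹ := by
        rw [← Real.rpow_natCast ((x1^2+x2^2) ^ m) 2, ← Real.rpow_mul hu.le]
        rw [show m * ((2:ℕ):ℝ) = -1 by rw [hm, ha1]; norm_num]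
        exact Real.rpow_neg_one _
      rw [hA2]
      field_simp
    · have hfe : (fun s => Pfun T a k t x1 s x3)
          = fun s => (-(a+a^2)*(x1^2+s^2)/2
            + k^2/(2*(1-(2+1/a))) * (x1^2+s^2) ^ ((1-(2+1/a)) : ℝ)
            + (a-2*a^2)*x3^2) / (T-t)^2 := by
        funext s; simp only [Pfun, if_neg ha1]
      rw [hfe]
      have hc1 : (1-(2+1/a)) ≠ 0 := by
        intro h
        apply ha1
        have h' : 1/a = -1 := by linarith
        field_simp at h'
        linarith
      have hd := ((((hq2.const_mul (-(a+a^2))).div_const 2).add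
        ((hda_sq2 x1 x2 (1-(2+1/a)) hu').const_mul (k^2/(2*(1-(2+1/a)))))).add_const
        ((a-2*a^2)*x3^2)).div_const ((T-t)^2)
      simp only [Pi.add_apply] at hd
      rw [hd.deriv]
      have hA2 : ((x1^2+x2^2) ^ m)^2 = (x1^2+x2^2) ^ ((1-(2+1/a)-1) : ℝ) := by
        rw [← Real.rpow_natCast ((x1^2+x2^2) ^ m) 2, ← Real.rpow_mul hu.le]
        congr 1
        rw [hm]; push_cast; ring
      have hgen : ∀ c x X : ℝ, c ≠ 0 → k^2/(2*c) * (2*x*c*X) = k^2*x*X := by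
        intro c x X hcne
        field_simp
      have hsimp : ∀ x X : ℝ, k^2/(2*(1-(2+1/a))) * (2*x*(1-(2+1/a))*X) = k^2*x*X :=
        fun x X => hgen (1-(2+1/a)) x X hc1
      rw [hA2, hsimp]
      ring
  have hdP3 : deriv (fun s => Pfun T a k t x1 x2 s) x3
      = (2*(a-2*a^2)*x3) / (T-t)^2 := by
    have hfe : (fun s => Pfun T a k t x1 x2 s)
        = fun s => ((-(a+a^2)*(x1^2+x2^2)/2
          + (if a = -1 then k^2/2 * Real.log (x1^2+x2^2)
             else k^2/(2*(1-(2+1/a))) * (x1^2+x2^2) ^ ((1-(2+1/a)) : ℝ)))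
          + (a-2*a^2)*s^2) / (T-t)^2 := by
      funext s; simp only [Pfun]
    rw [hfe]
    have hd := (((hasDerivAt_pow 2 x3).const_mul (a-2*a^2)).const_add
      (-(a+a^2)*(x1^2+x2^2)/2
        + (if a = -1 then k^2/2 * Real.log (x1^2+x2^2)
           else k^2/(2*(1-(2+1/a))) * (x1^2+x2^2) ^ ((1-(2+1/a)) : ℝ)))).div_const ((T-t)^2)
    rw [hd.deriv]
    push_cast
    ring
  -- eliminate the (m-1) exponent
  have hB : (x1^2+x2^2) ^ ((m-1) : ℝ) = (x1^2+x2^2) ^ m / (x1^2+x2^2) := by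
    rw [Real.rpow_sub hu, Real.rpow_one]
  refine ⟨?_, ?_, ?_⟩
  · rw [hdV1t, hdV1x1, hdV1x2, hdV1x3, hdP1, hV1 x1 x2 x3 t, hV2 x1 x2 x3 t, hB]
    obtain ⟨A, hA⟩ : ∃ A : ℝ, A = (x1^2+x2^2) ^ m := ⟨_, rfl⟩
    rw [← hA, hm]
    field_simp
    ring
  · rw [hdV2t, hdV2x1, hdV2x2, hdV2x3, hdP2, hV1 x1 x2 x3 t, hV2 x1 x2 x3 t, hB]
    obtain ⟨A, hA⟩ : ∃ A : ℝ, A = (x1^2+x2^2) ^ m := ⟨_, rfl⟩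
    rw [← hA, hm]
    field_simp
    ring
  · rw [hdV3t, hdV3x1, hdV3x2, hdV3x3, hdP3, hV3]
    field_simp
    ring
end

section
/- Define the axisymmetric fields v^r(t,r,z) = a r/(T*-t), v^θ(t,r,z) = k r^{-(1+1/a)}/(T*-t), v^z(t,r,z) = -2a z/(T*-t) for T* > 0, a ≠ 0, k ∈ ℝ, r > 0, t ∈ [0,T*). Then the angular momentum equation ∂ₜv^θ + v^r ∂ᵣv^θ + v^z ∂_z v^θ = -(v^r v^θ)/r holds pointwise. -/
/-- The angular momentum (swirl) equation
`∂ₜv^θ + v^r ∂ᵣ v^θ + v^z ∂_z v^θ = -(v^r v^θ)/r`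
holds pointwise for the explicit axisymmetric fields
`v^r = a r/(T-t)`, `v^θ = k r^{-(1+1/a)}/(T-t)`, `v^z = -2a z/(T-t)`. -/
theorem stmt2 (T a k : ℝ) (hT : 0 < T) (ha : a ≠ 0)
    (t r z : ℝ) (ht0 : 0 ≤ t) (htT : t < T) (hr : 0 < r) :
    deriv (fun s : ℝ => k * r ^ (-(1 + 1 / a)) / (T - s)) t
      + (a * r / (T - t)) * deriv (fun s : ℝ => k * s ^ (-(1 + 1 / a)) / (T - t)) r
      + (-2 * a * z / (T - t)) * deriv (fun _ : ℝ => k * r ^ (-(1 + 1 / a)) / (T - t)) z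
      = -((a * r / (T - t)) * (k * r ^ (-(1 + 1 / a)) / (T - t))) / r := by
  have hTt : T - t ≠ 0 := sub_ne_zero.mpr htT.ne'
  set p : ℝ := -(1 + 1 / a) with hp
  have h1 : HasDerivAt (fun s : ℝ => k * r ^ p / (T - s))
      (k * r ^ p / (T - t) ^ 2) t := by
    have hinv : HasDerivAt (fun s : ℝ => (T - s)⁻¹) (1 / (T - t) ^ 2) t := by
      have hb : HasDerivAt (fun s : ℝ => T - s) (-1) t := by
        simpa using (hasDerivAt_id t).const_sub T
      have h := hb.inv hTt
      rw [neg_neg] at h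
      exact h
    have := hinv.const_mul (k * r ^ p)
    simpa [div_eq_mul_inv, mul_comm, mul_left_comm, mul_assoc] using this
  have h2 : HasDerivAt (fun s : ℝ => k * s ^ p / (T - t))
      (k / (T - t) * (p * r ^ (p - 1))) r := by
    have hrp : HasDerivAt (fun s : ℝ => s ^ p) (p * r ^ (p - 1)) r :=
      Real.hasDerivAt_rpow_const (Or.inl hr.ne')
    have := (hrp.const_mul k).div_const (T - t)
    simpa [div_eq_mul_inv, mul_comm, mul_left_comm, mul_assoc] using this
  rw [h1.deriv, h2.deriv, deriv_const]
  have hrpow : r ^ (p - 1) * r = r ^ p := by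
    nth_rewrite 2 [← Real.rpow_one r]
    rw [← Real.rpow_add hr]
    norm_num
  have hap : a * p = -(a + 1) := by
    rw [hp]; field_simp
  have hsub : r ^ (p - 1) = r ^ p / r := by rw [eq_div_iff hr.ne', hrpow]
  have hB : (a * r / (T - t)) * (k / (T - t) * (p * r ^ (p - 1)))
      = a * p * k * r ^ p / (T - t) ^ 2 := by
    rw [hsub]; field_simp
  have hC : -((a * r / (T - t)) * (k * r ^ p / (T - t))) / r
      = -(a * k * r ^ p) / (T - t) ^ 2 := by
    field_simp
  rw [hB, hC, mul_zero, add_zero, ← add_div]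
  congr 1
  linear_combination k * r ^ p * hap
end

section
/- Let a ≠ 0 and v^θ(t,r,z) = k z^{p₁} r^{q₁}/(T*-t) with k ≠ 0, and let v^r = a r/(T*-t), v^z = -2a z/(T*-t). If v^θ satisfies ∂ₜv^θ + v^r ∂ᵣv^θ + v^z ∂_z v^θ = -(v^r v^θ)/r and ∂_z v^θ = 0 pointwise on {r > 0, z > 0, 0 ≤ t < T*}, then p₁ = 0 and q₁ = -(1 + 1/a). -/
/-- If `v^θ = k z^{p₁} r^{q₁}/(T-t)` (with `k ≠ 0`) satisfies the swirl equation
with `v^r = ar/(T-t)`, `v^z = -2az/(T-t)`, and `∂_z v^θ = 0` pointwise on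
`{r > 0, z > 0, 0 ≤ t < T}`, then `p₁ = 0` and `q₁ = -(1 + 1/a)`. -/
theorem stmt5 (T a k p₁ q₁ : ℝ) (hT : 0 < T) (ha : a ≠ 0) (hk : k ≠ 0)
    (hswirl : ∀ t r z : ℝ, 0 ≤ t → t < T → 0 < r → 0 < z →
      deriv (fun s : ℝ => k * z ^ p₁ * r ^ q₁ / (T - s)) t
        + (a * r / (T - t)) * deriv (fun s : ℝ => k * z ^ p₁ * s ^ q₁ / (T - t)) r
        + (-2 * a * z / (T - t)) * deriv (fun s : ℝ => k * s ^ p₁ * r ^ q₁ / (T - t)) z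
        = -((a * r / (T - t)) * (k * z ^ p₁ * r ^ q₁ / (T - t))) / r)
    (hz : ∀ t r z : ℝ, 0 ≤ t → t < T → 0 < r → 0 < z →
      deriv (fun s : ℝ => k * s ^ p₁ * r ^ q₁ / (T - t)) z = 0) :
    p₁ = 0 ∧ q₁ = -(1 + 1 / a) := by
  have hTne : T ≠ 0 := hT.ne'
  -- p₁ = 0 from hz at (0,1,1)
  have hz0 := hz 0 1 1 le_rfl hT one_pos one_pos
  have Hz : HasDerivAt (fun s : ℝ => k * s ^ p₁ * (1:ℝ) ^ q₁ / (T - 0))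
      (k * (p₁ * (1:ℝ) ^ (p₁ - 1)) * (1:ℝ) ^ q₁ / (T - 0)) 1 :=
    (((Real.hasDerivAt_rpow_const (p := p₁) (Or.inl one_ne_zero)).const_mul k).mul_const
      ((1:ℝ) ^ q₁)).div_const (T - 0)
  rw [Hz.deriv] at hz0
  simp only [Real.one_rpow, sub_zero, mul_one] at hz0
  have hp : p₁ = 0 := by
    rcases mul_eq_zero.1 ((div_eq_zero_iff.1 hz0).resolve_right hTne) with h | h
    · exact absurd h hk
    · exact h
  refine ⟨hp, ?_⟩
  -- swirl at (0,1,1)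
  have hs := hswirl 0 1 1 le_rfl hT one_pos one_pos
  have hz1 := hz 0 1 1 le_rfl hT one_pos one_pos
  rw [hz1] at hs
  -- time derivative
  have HT : HasDerivAt (fun s : ℝ => k * (1:ℝ) ^ p₁ * (1:ℝ) ^ q₁ / (T - s))
      ((0 * (T - 0) - k * (1:ℝ) ^ p₁ * (1:ℝ) ^ q₁ * (-1)) / (T - 0) ^ 2) 0 := by
    have h1 : HasDerivAt (fun s : ℝ => T - s) (-1 : ℝ) 0 := by
      simpa using (hasDerivAt_id (0:ℝ)).const_sub T
    exact (hasDerivAt_const 0 (k * (1:ℝ) ^ p₁ * (1:ℝ) ^ q₁)).div h1 (by simpa using hTne)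
  rw [HT.deriv] at hs
  -- r derivative
  have HR : HasDerivAt (fun s : ℝ => k * (1:ℝ) ^ p₁ * s ^ q₁ / (T - 0))
      (k * (1:ℝ) ^ p₁ * (q₁ * (1:ℝ) ^ (q₁ - 1)) / (T - 0)) 1 :=
    ((Real.hasDerivAt_rpow_const (p := q₁) (Or.inl one_ne_zero)).const_mul
      (k * (1:ℝ) ^ p₁)).div_const (T - 0)
  rw [HR.deriv] at hs
  simp only [Real.one_rpow, sub_zero, mul_one, one_mul] at hs
  -- hs : k*1/T^2 ... solve
  have hT2 : (T:ℝ)^2 ≠ 0 := pow_ne_zero 2 hTne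
  field_simp at hs
  -- derive q₁
  have h4 : (T ^ 2 * (T * T) : ℝ) ≠ 0 := by positivity
  have hkey : (1 + a * q₁ : ℝ) = -a := by
    refine mul_left_cancel₀ hk ?_
    refine mul_right_cancel₀ h4 ?_
    linear_combination (T ^ 2 * (T * T)) * hs
  have : a * q₁ = -a - 1 := by linarith
  field_simp
  linarith [this]
end
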